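/- The map q ↦ x ∧ q from [ℙ_m(ℝ³)]³ to vector fields has kernel exactly { q = x r : r ∈ ℙ_{m-1}(ℝ³) } (radial polynomial fields); consequently dim( x ∧ [ℙ_m(K)]³ ) = 3 dim ℙ_m - dim ℙ_{m-1} for any K ⊂ ℝ³ with nonempty interior, where dim ℙ_m = (m+1)(m+2)(m+3)/6. -/

import Mathlib

open MvPolynomial

namespace Stmt18

/-- The components of the cross product `x ∧ q` of the position field with a polynomial
vector field `q`, as polynomials: `(x ∧ q)_i = x_{i+1} q_{i+2} - x_{i+2} q_{i+1}`. -/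
noncomputable def crossComp (q : Fin 3 → MvPolynomial (Fin 3) ℝ) (i : Fin 3) :
    MvPolynomial (Fin 3) ℝ :=
  X (i + 1) * q (i + 2) - X (i + 2) * q (i + 1)

/-! ### Auxiliary algebraic lemmas -/

lemma primeX (i : Fin 3) : Prime (X i : MvPolynomial (Fin 3) ℝ) := by
  have h0 : Prime (X 0 : MvPolynomial (Fin 3) ℝ) := by
    rw [← MulEquiv.prime_iff (MvPolynomial.finSuccEquiv ℝ 2).toMulEquiv]
    simpa [MvPolynomial.finSuccEquiv_X_zero] using
      (Polynomial.prime_X : Prime (Polynomial.X : Polynomial (MvPolynomial (Fin 2) ℝ)))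
  have := (MulEquiv.prime_iff (MvPolynomial.renameEquiv ℝ (Equiv.swap (0 : Fin 3) i)).toMulEquiv).mpr h0
  simpa [MvPolynomial.renameEquiv_apply, Equiv.swap_apply_left] using this

lemma tdeg_X_mul (i : Fin 3) (r : MvPolynomial (Fin 3) ℝ) (hr : r ≠ 0) :
    (X i * r).totalDegree = r.totalDegree + 1 := by
  refine le_antisymm ?_ ?_
  · simpa [MvPolynomial.totalDegree_X, add_comm] using MvPolynomial.totalDegree_mul (X i) r
  · obtain ⟨d, hd, hdeg⟩ := Finset.exists_mem_eq_sup r.support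
      (MvPolynomial.support_nonempty.mpr hr) (fun d => d.sum fun _ e => e)
    have hcoeff : MvPolynomial.coeff (Finsupp.single i 1 + d) (X i * r) = MvPolynomial.coeff d r :=
      MvPolynomial.coeff_X_mul d i r
    have hmem : (Finsupp.single i 1 + d) ∈ (X i * r).support := by
      rw [MvPolynomial.mem_support_iff, hcoeff]
      exact MvPolynomial.mem_support_iff.mp hd
    have := MvPolynomial.le_totalDegree hmem
    have hsum : ((Finsupp.single i 1 + d).sum fun _ e => e) = 1 + (d.sum fun _ e => e) := by
      rw [Finsupp.sum_add_index' (fun _ => rfl) (fun _ _ _ => rfl)]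
      simp [Finsupp.sum_single_index]
    have ht : r.totalDegree = d.sum fun _ e => e := hdeg
    omega

/-- The kernel characterization (statement 18, part 1). -/
lemma kernel_char (m : ℕ) (q : Fin 3 → MvPolynomial (Fin 3) ℝ)
    (hq : ∀ i, (q i).totalDegree ≤ m) :
    (∀ i, crossComp q i = 0) ↔
      ∃ r : MvPolynomial (Fin 3) ℝ, r.totalDegree ≤ m - 1 ∧ ∀ i, q i = X i * r := by
  constructor
  · intro h
    have e : ∀ i : Fin 3, X (i+1) * q (i+2) = X (i+2) * q (i+1) := by
      intro i; have := h i; rw [crossComp, sub_eq_zero] at this; exact this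
    have h2 : X 0 * q 1 = X 1 * q 0 := by simpa using e 2
    have h1 : X 2 * q 0 = X 0 * q 2 := by simpa using e 1
    have hdvd : (X 0 : MvPolynomial (Fin 3) ℝ) ∣ q 0 := by
      have : (X 0 : MvPolynomial (Fin 3) ℝ) ∣ X 1 * q 0 := ⟨q 1, h2.symm⟩
      rcases (primeX 0).2.2 _ _ this with h | h
      · exact absurd (MvPolynomial.X_dvd_X.mp h) (by decide)
      · exact h
    obtain ⟨r, hr⟩ := hdvd
    have hx0 : (X 0 : MvPolynomial (Fin 3) ℝ) ≠ 0 := MvPolynomial.X_ne_zero 0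
    have hq1 : q 1 = X 1 * r := by
      apply mul_left_cancel₀ hx0
      rw [h2, hr]; ring
    have hq2 : q 2 = X 2 * r := by
      apply mul_left_cancel₀ hx0
      rw [← h1, hr]; ring
    refine ⟨r, ?_, ?_⟩
    · rcases eq_or_ne r 0 with rfl | hrne
      · simp
      · have := hq 0
        rw [hr, tdeg_X_mul 0 r hrne] at this
        omega
    · intro i; fin_cases i <;> assumption
  · rintro ⟨r, -, hrq⟩ i
    rw [crossComp, hrq, hrq]; ring

/-! ### Vanishing of polynomials on open sets -/

lemma vanish {U : Set (EuclideanSpace ℝ (Fin 3))} (hU : IsOpen U) (hne : U.Nonempty)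
    (p : MvPolynomial (Fin 3) ℝ)
    (h : ∀ x ∈ U, eval (fun j => x j) p = 0) : p = 0 := by
  set L : EuclideanSpace ℝ (Fin 3) →L[ℝ] (Fin 3 → ℝ) :=
    (PiLp.continuousLinearEquiv 2 ℝ (fun _ : Fin 3 => ℝ) : _ ≃L[ℝ] _).toContinuousLinearMap
  have han : AnalyticOnNhd ℝ (fun x => eval (L x) p) Set.univ :=
    AnalyticOnNhd.eval_continuousLinearMap L p
  obtain ⟨z₀, hz₀⟩ := hne
  have hev : (fun x => eval (L x) p) =ᶠ[nhds z₀] 0 := by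
    filter_upwards [hU.mem_nhds hz₀] with x hx
    exact h x hx
  have hzero := han.eqOn_zero_of_preconnected_of_eventuallyEq_zero
    isPreconnected_univ (Set.mem_univ z₀) hev
  apply MvPolynomial.funext (q := 0)
  intro y
  have := hzero (Set.mem_univ ((PiLp.continuousLinearEquiv 2 ℝ (fun _ : Fin 3 => ℝ)).symm y))
  rw [map_zero]; exact this

/-! ### Counting: dimension of `ℙ_m(ℝ³)` -/

lemma two_choose (n : ℕ) : 2 * Nat.choose (n+2) 2 = (n+1)*(n+2) := by
  induction n with
  | zero => decide
  | succ n ih =>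
    have : (n+3).choose 2 = (n+2).choose 1 + (n+2).choose 2 := Nat.choose_succ_succ' (n+2) 1
    rw [show n+1+2 = n+3 from rfl, this, Nat.mul_add, ih, Nat.choose_one_right]
    ring

lemma six_choose (m : ℕ) : 6 * Nat.choose (m+3) 3 = (m+1)*(m+2)*(m+3) := by
  induction m with
  | zero => decide
  | succ m ih =>
    have : (m+4).choose 3 = (m+3).choose 2 + (m+3).choose 3 := Nat.choose_succ_succ' (m+3) 2
    rw [show m+1+3 = m+4 from rfl, this, Nat.mul_add, ih,
      show 6 * (m+3).choose 2 = 3 * (2 * (m+1+2).choose 2) by ring_nf, two_choose]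
    ring

lemma div_six (m : ℕ) : (m+1)*(m+2)*(m+3)/6 = Nat.choose (m+3) 3 := by
  rw [← six_choose]
  exact Nat.mul_div_cancel_left _ (by norm_num)

noncomputable def eA (m : ℕ) : {s : Fin 3 →₀ ℕ // (s.sum fun _ e => e) ≤ m} ≃
    {t : Fin 3 → ℕ // ∑ i, t i ≤ m} :=
  Equiv.subtypeEquiv Finsupp.equivFunOnFinite (by
    intro s
    rw [Finsupp.sum_fintype _ _ (fun _ => rfl)]
    simp)

def eB (m : ℕ) : {t : Fin 3 → ℕ // ∑ i, t i ≤ m} ≃ {u : Fin 4 → ℕ // ∑ i, u i = m} where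
  toFun t := ⟨![t.1 0, t.1 1, t.1 2, m - (t.1 0 + t.1 1 + t.1 2)], by
    have := t.2; rw [Fin.sum_univ_three] at this
    rw [Fin.sum_univ_four]; simp; omega⟩
  invFun u := ⟨![u.1 0, u.1 1, u.1 2], by
    have := u.2; rw [Fin.sum_univ_four] at this
    rw [Fin.sum_univ_three]; simp; omega⟩
  left_inv t := by
    ext i; fin_cases i <;> simp
  right_inv u := by
    have := u.2; rw [Fin.sum_univ_four] at this
    ext i; fin_cases i <;> simp <;> omega

noncomputable def eC1 (m : ℕ) : {u : Fin 4 → ℕ // ∑ i, u i = m} ≃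
    {s : Fin 4 →₀ ℕ // (s.sum fun _ e => e) = m} :=
  (Equiv.subtypeEquiv (Finsupp.equivFunOnFinite (α := Fin 4) (M := ℕ)) (by
    intro s
    rw [Finsupp.sum_fintype _ _ (fun _ => rfl)]
    simp)).symm

noncomputable def eC2 (m : ℕ) : {s : Fin 4 →₀ ℕ // (s.sum fun _ e => e) = m} ≃ Sym (Fin 4) m :=
  Equiv.subtypeEquiv (Multiset.toFinsupp (α := Fin 4)).toEquiv.symm (by
    intro s
    have : (Multiset.toFinsupp (α := Fin 4)).toEquiv.symm s = Finsupp.toMultiset s := by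
      simp [Multiset.toFinsupp_symm_apply]
    rw [this, Finsupp.card_toMultiset]
    rfl)

noncomputable def eC (m : ℕ) : {u : Fin 4 → ℕ // ∑ i, u i = m} ≃ Sym (Fin 4) m :=
  (eC1 m).trans (eC2 m)

lemma card_deg_le (m : ℕ) :
    Nat.card {s : Fin 3 →₀ ℕ // (s.sum fun _ e => e) ≤ m} = Nat.choose (m+3) 3 := by
  rw [Nat.card_congr (((eA m).trans (eB m)).trans (eC m)), Nat.card_eq_fintype_card,
    Sym.card_sym_eq_choose]
  have h4 : Fintype.card (Fin 4) = 4 := by simp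
  rw [h4, show 4 + m - 1 = m + 3 by omega]
  rw [← Nat.choose_symm (by omega : m ≤ m + 3), show m + 3 - m = 3 by omega]

lemma finrank_restrict (m : ℕ) :
    Module.finrank ℝ (restrictTotalDegree (Fin 3) ℝ m) = Nat.choose (m+3) 3 := by
  have hb : Module.Basis {n : Fin 3 →₀ ℕ | (n.sum fun _ e => e) ≤ m} ℝ
      (restrictTotalDegree (Fin 3) ℝ m) := basisRestrictSupport ℝ _
  rw [Module.finrank_eq_nat_card_basis hb]
  exact card_deg_le m

/-! ### The linear maps -/

noncomputable def T (K : Set (EuclideanSpace ℝ (Fin 3))) :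
    (Fin 3 → MvPolynomial (Fin 3) ℝ) →ₗ[ℝ] (K → Fin 3 → ℝ) where
  toFun q := fun x i => eval (fun j => (x : EuclideanSpace ℝ (Fin 3)) j) (crossComp q i)
  map_add' q q' := by
    funext x i
    simp only [crossComp, Pi.add_apply, map_sub, map_mul, map_add]
    ring
  map_smul' c q := by
    funext x i
    simp only [crossComp, Pi.smul_apply, smul_eq_C_mul, map_sub, map_mul, eval_C,
      RingHom.id_apply, smul_eq_mul]
    ring

noncomputable def incl (m : ℕ) : (Fin 3 → restrictTotalDegree (Fin 3) ℝ m) →ₗ[ℝ]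
    (Fin 3 → MvPolynomial (Fin 3) ℝ) :=
  LinearMap.pi (fun i => (restrictTotalDegree (Fin 3) ℝ m).subtype ∘ₗ LinearMap.proj i)

@[simp] lemma incl_apply (m : ℕ) (v : Fin 3 → restrictTotalDegree (Fin 3) ℝ m) (i : Fin 3) :
    incl m v i = (v i : MvPolynomial (Fin 3) ℝ) := rfl

noncomputable def J (m : ℕ) : (restrictTotalDegree (Fin 3) ℝ m) →ₗ[ℝ]
    (Fin 3 → restrictTotalDegree (Fin 3) ℝ (m+1)) :=
  LinearMap.pi (fun i => LinearMap.codRestrict (restrictTotalDegree (Fin 3) ℝ (m+1))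
    ((LinearMap.mulLeft ℝ (X i)) ∘ₗ (restrictTotalDegree (Fin 3) ℝ m).subtype)
    (by
      rintro ⟨r, hr⟩
      rcases eq_or_ne r 0 with rfl | hrne
      · simp [mem_restrictTotalDegree]
      · rw [mem_restrictTotalDegree] at hr ⊢
        simp only [LinearMap.coe_comp, Function.comp_apply, Submodule.coe_subtype,
          LinearMap.mulLeft_apply]
        rw [tdeg_X_mul i r hrne]
        omega))

@[simp] lemma J_apply (m : ℕ) (r : restrictTotalDegree (Fin 3) ℝ m) (i : Fin 3) :
    ((J m r i : MvPolynomial (Fin 3) ℝ)) = X i * (r : MvPolynomial (Fin 3) ℝ) := rfl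

lemma J_inj (m : ℕ) : Function.Injective (J m) := by
  intro r r' h
  ext1
  have := congrArg (fun v => (v 0 : MvPolynomial (Fin 3) ℝ)) h
  simp only [J_apply] at this
  exact mul_left_cancel₀ (X_ne_zero 0) this

set_option maxHeartbeats 1000000 in
set_option synthInstance.maxHeartbeats 200000 in
theorem stmt18 (m : ℕ) (K : Set (EuclideanSpace ℝ (Fin 3))) (hK : (interior K).Nonempty) :
    (∀ q : Fin 3 → MvPolynomial (Fin 3) ℝ, (∀ i, (q i).totalDegree ≤ m) →
      ((∀ i, crossComp q i = 0) ↔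
        ∃ r : MvPolynomial (Fin 3) ℝ, r.totalDegree ≤ m - 1 ∧ ∀ i, q i = X i * r)) ∧
    Module.finrank ℝ
      (Submodule.span ℝ {f : K → Fin 3 → ℝ | ∃ q : Fin 3 → MvPolynomial (Fin 3) ℝ,
        (∀ i, (q i).totalDegree ≤ m) ∧
        ∀ x : K, ∀ i, f x i = eval (fun j => (x : EuclideanSpace ℝ (Fin 3)) j) (crossComp q i)})
      = 3 * ((m + 1) * (m + 2) * (m + 3) / 6) - m * (m + 1) * (m + 2) / 6 := by
  refine ⟨kernel_char m, ?_⟩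
  classical
  set T₂ : (Fin 3 → restrictTotalDegree (Fin 3) ℝ m) →ₗ[ℝ] (K → Fin 3 → ℝ) :=
    (T K) ∘ₗ (incl m) with hT₂
  set S : Set (K → Fin 3 → ℝ) := {f : K → Fin 3 → ℝ | ∃ q : Fin 3 → MvPolynomial (Fin 3) ℝ,
      (∀ i, (q i).totalDegree ≤ m) ∧
      ∀ x : K, ∀ i, f x i = eval (fun j => (x : EuclideanSpace ℝ (Fin 3)) j) (crossComp q i)}
    with hS
  -- span S = range T₂
  have hspan : Submodule.span ℝ S = LinearMap.range T₂ := by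
    apply le_antisymm
    · rw [Submodule.span_le]
      rintro f ⟨q, hdeg, hval⟩
      refine ⟨fun i => ⟨q i, (mem_restrictTotalDegree _ _ _).mpr (hdeg i)⟩, ?_⟩
      funext x i
      exact (hval x i).symm
    · rintro f ⟨v, rfl⟩
      apply Submodule.subset_span
      refine ⟨incl m v, fun i => (mem_restrictTotalDegree _ _ _).mp (v i).2, fun x i => rfl⟩
  -- membership in kernel of T₂
  have hker : ∀ v, T₂ v = 0 ↔ ∀ i, crossComp (incl m v) i = 0 := by
    intro v
    constructor
    · intro hv i
      apply vanish isOpen_interior hK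
      intro x hx
      have : (x : EuclideanSpace ℝ (Fin 3)) ∈ K := interior_subset hx
      exact congrFun (congrFun hv ⟨x, this⟩) i
    · intro hv
      funext x i
      simp only [hT₂, LinearMap.comp_apply, T, LinearMap.coe_mk, AddHom.coe_mk, hv i, map_zero]
      rfl
  have hrn := LinearMap.finrank_range_add_finrank_ker T₂
  have hV : Module.finrank ℝ (Fin 3 → restrictTotalDegree (Fin 3) ℝ m)
      = 3 * Nat.choose (m+3) 3 := by
    rw [Module.finrank_pi_fintype, finrank_restrict]
    simp [Finset.sum_const]
  rw [hspan]
  -- compute the kernel dimension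
  rcases Nat.eq_zero_or_pos m with rfl | hm
  · -- m = 0 : trivial kernel
    have hkbot : LinearMap.ker T₂ = ⊥ := by
      rw [eq_bot_iff]
      rintro v hv
      rw [LinearMap.mem_ker] at hv
      obtain ⟨r, -, hrq⟩ := (kernel_char 0 (incl 0 v)
        (fun i => (mem_restrictTotalDegree _ _ _).mp (v i).2)).mp ((hker v).mp hv)
      have hr0 : r = 0 := by
        by_contra hrne
        have := (mem_restrictTotalDegree _ _ _).mp (v 0).2
        rw [show ((v 0 : MvPolynomial (Fin 3) ℝ)) = incl 0 v 0 from rfl, hrq 0,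
          tdeg_X_mul 0 r hrne] at this
        omega
      have : ∀ i, (v i : MvPolynomial (Fin 3) ℝ) = 0 := by
        intro i
        rw [show ((v i : MvPolynomial (Fin 3) ℝ)) = incl 0 v i from rfl, hrq i, hr0, mul_zero]
      simp only [Submodule.mem_bot]
      funext i
      exact Subtype.ext (this i)
    rw [hkbot] at hrn
    simp only [finrank_bot] at hrn
    rw [hV] at hrn
    norm_num at hrn ⊢
    omega
  · -- m ≥ 1 : kernel ≅ ℙ_{m-1}
    obtain ⟨m', rfl⟩ : ∃ m', m = m' + 1 := ⟨m - 1, by omega⟩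
    have hrange : LinearMap.range (J m') = LinearMap.ker T₂ := by
      apply le_antisymm
      · rintro v ⟨r, rfl⟩
        rw [LinearMap.mem_ker, hker]
        intro i
        have : ∀ j, incl (m'+1) (J m' r) j = X j * (r : MvPolynomial (Fin 3) ℝ) := fun j => rfl
        rw [crossComp, this, this]
        ring
      · intro v hv
        rw [LinearMap.mem_ker] at hv
        obtain ⟨r, hrdeg, hrq⟩ := (kernel_char (m'+1) (incl (m'+1) v)
          (fun i => (mem_restrictTotalDegree _ _ _).mp (v i).2)).mp ((hker v).mp hv)
        refine ⟨⟨r, (mem_restrictTotalDegree _ _ _).mpr (by simpa using hrdeg)⟩, ?_⟩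
        funext i
        exact Subtype.ext ((J_apply m' _ i).trans (hrq i).symm)
    have hkdim : Module.finrank ℝ (LinearMap.ker T₂) = Nat.choose (m'+3) 3 := by
      rw [← hrange, LinearMap.finrank_range_of_inj (J_inj m'), finrank_restrict]
    rw [hkdim, hV] at hrn
    have e1 : (m' + 1 + 1) * (m' + 1 + 2) * (m' + 1 + 3) / 6 = Nat.choose (m'+1+3) 3 := by
      rw [show m'+1+1 = m'+2 from rfl, show m'+1+2 = m'+3 from rfl, show m'+1+3 = m'+4 from rfl]
      have := div_six (m'+1)
      simpa using this
    have e2 : (m' + 1) * (m' + 1 + 1) * (m' + 1 + 2) / 6 = Nat.choose (m'+3) 3 := div_six m'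
    rw [e1, e2]
    omega

end Stmt18
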